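/- arXiv:2210.05431 — 7 statements merged into one kernel-verified Lean document; each statement's English description precedes it below -/
import Mathlib

section
/- For x > 1, the function W̄₋₁(x) := -W₋₁(-e^{-x}) (where W₋₁ is the negative branch of the Lambert W function) satisfies x + log x ≤ W̄₋₁(x) ≤ x + log x + min{1/2, 1/√x}. -/
/-- Strict monotonicity of `z ↦ z - log z` on `[1, ∞)`. -/
lemma aux_mono {a b : ℝ} (ha : 1 ≤ a) (hab : a < b) :
    a - Real.log a < b - Real.log b := by
  have ha0 : 0 < a := lt_of_lt_of_le one_pos ha
  have hb0 : 0 < b := lt_trans ha0 hab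
  have h1 : Real.log b - Real.log a = Real.log (b / a) := (Real.log_div hb0.ne' ha0.ne').symm
  have h2 : Real.log (b / a) < b / a - 1 := by
    apply Real.log_lt_sub_one_of_pos (div_pos hb0 ha0)
    intro h
    have : b = a := by field_simp at h; linarith
    linarith
  have h3 : b / a - 1 ≤ b - a := by
    rw [div_sub_one ha0.ne', div_le_iff₀ ha0]
    nlinarith
  linarith

/-- `log x ≤ 5x/8 - 1/2` for `x > 0`. -/
lemma aux_log_le1 {x : ℝ} (hx : 0 < x) : Real.log x ≤ 5 * x / 8 - 1 / 2 := by
  have h1 : Real.log (5 * x / 8) ≤ 5 * x / 8 - 1 :=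
    Real.log_le_sub_one_of_pos (by positivity)
  have h2 : Real.log (5 * x / 8) = Real.log x + Real.log (5 / 8) := by
    rw [show 5 * x / 8 = x * (5 / 8) by ring, Real.log_mul hx.ne' (by norm_num)]
  have h3 : Real.log (8 / 5) ≤ 1 / 2 := by
    rw [Real.log_le_iff_le_exp (by norm_num)]
    have := Real.exp_one_gt_d9
    have h4 : Real.exp (1 / 2) ^ 2 = Real.exp 1 := by
      rw [← Real.exp_nat_mul]; norm_num
    nlinarith [Real.exp_pos (1 / 2 : ℝ)]
  have h5 : Real.log (5 / 8) = -Real.log (8 / 5) := by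
    rw [← Real.log_inv]; norm_num
  linarith

/-- `log x ≤ √x` for `x > 0`. -/
lemma aux_log_le2 {x : ℝ} (hx : 0 < x) : Real.log x ≤ Real.sqrt x := by
  have hs : 0 < Real.sqrt x := Real.sqrt_pos.mpr hx
  have h1 : Real.log (Real.sqrt x / 2) ≤ Real.sqrt x / 2 - 1 :=
    Real.log_le_sub_one_of_pos (by positivity)
  have h2 : Real.log (Real.sqrt x / 2) = Real.log (Real.sqrt x) - Real.log 2 :=
    Real.log_div hs.ne' (by norm_num)
  have h3 : Real.log (Real.sqrt x) = Real.log x / 2 := Real.log_sqrt hx.le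
  have h4 : Real.log 2 ≤ 1 := by
    have := Real.log_le_sub_one_of_pos (by norm_num : (0:ℝ) < 2); linarith
  linarith

/-- For `x > 1`, the function `W̄₋₁` (characterized as the largest solution
`z ≥ 1` of `z - log z = x`) satisfies `x + log x ≤ W̄₋₁ x ≤ x + log x + min (1/2) (1/√x)`. -/
theorem stmt_0 (W : ℝ → ℝ)
    (hW : ∀ x : ℝ, 1 ≤ x →
      1 ≤ W x ∧ W x - Real.log (W x) = x ∧ ∀ z : ℝ, 1 ≤ z → z - Real.log z = x → z ≤ W x) :
    ∀ x : ℝ, 1 < x →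
      x + Real.log x ≤ W x ∧
      W x ≤ x + Real.log x + min (1/2 : ℝ) (1 / Real.sqrt x) := by
  intro x hx
  obtain ⟨hW1, hWeq, _⟩ := hW x hx.le
  have hx0 : 0 < x := lt_trans one_pos hx
  have hlx : 0 < Real.log x := Real.log_pos hx
  set c : ℝ := min (1/2 : ℝ) (1 / Real.sqrt x) with hc
  have hs : 0 < Real.sqrt x := Real.sqrt_pos.mpr hx0
  have hc0 : 0 < c := lt_min (by norm_num) (by positivity)
  have hc12 : c ≤ 1 / 2 := min_le_left _ _
  -- lower bound
  have hlow : x + Real.log x ≤ W x := by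
    by_contra h
    push_neg at h
    have h1 : 1 ≤ W x := hW1
    have := aux_mono h1 h
    have hz0 : 0 < x + Real.log x := by linarith
    have hlog : Real.log x ≤ Real.log (x + Real.log x) :=
      Real.log_le_log hx0 (by linarith)
    linarith
  refine ⟨hlow, ?_⟩
  -- upper bound: show z₁ - log z₁ ≥ x where z₁ = x + log x + c
  set z₁ : ℝ := x + Real.log x + c with hz₁
  have hz₁1 : 1 ≤ z₁ := by simp only [hz₁]; linarith
  have hkey : x ≤ z₁ - Real.log z₁ := by
    have hq : 1 + c + c ^ 2 / 2 ≤ Real.exp c := Real.quadratic_le_exp_of_nonneg hc0.le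
    have hmain : z₁ ≤ x * Real.exp c := by
      have h2 : x * (1 + c + c ^ 2 / 2) ≤ x * Real.exp c := by nlinarith
      have h3 : z₁ ≤ x * (1 + c + c ^ 2 / 2) := by
        -- need: log x + c ≤ x*c + x*c²/2
        rcases le_or_gt x 4 with h4 | h4
        · -- c may be 1/2 or 1/√x ≥ something; use log x ≤ 5x/8 - 1/2 and c ≤ 1/2
          have hl := aux_log_le1 hx0
          -- need log x + c ≤ x c + x c²/2, with x > 1, c ≤ 1/2.
          -- f(c) = (x-1)c + x c²/2 - log x; at c it's ≥ ... since increasing in c?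
          -- (x-1)c + xc²/2 is increasing in c; but we need lower bound on c... 
          -- Since x ≤ 4, √x ≤ 2 so 1/√x ≥ 1/2, hence c = 1/2.
          have hs4 : Real.sqrt x ≤ 2 := by
            rw [show (2:ℝ) = Real.sqrt 4 by rw [show (4:ℝ) = 2^2 by norm_num, Real.sqrt_sq]; norm_num]
            exact Real.sqrt_le_sqrt h4
          have hcv : c = 1 / 2 := by
            rw [hc, min_eq_left]
            rw [le_div_iff₀ hs]; linarith
          rw [hcv] at *
          simp only [hz₁, hcv]
          nlinarith
        · -- x > 4: c = 1/√x
          have hs2 : 2 < Real.sqrt x := by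
            have : Real.sqrt 4 < Real.sqrt x := Real.sqrt_lt_sqrt (by norm_num) h4
            rwa [show (4:ℝ) = 2^2 by norm_num, Real.sqrt_sq (by norm_num : (0:ℝ) ≤ 2)] at this
          have hcv : c = 1 / Real.sqrt x := by
            rw [hc, min_eq_right]
            rw [div_le_div_iff₀ hs (by norm_num)]; linarith
          have hsq : Real.sqrt x ^ 2 = x := Real.sq_sqrt hx0.le
          have hl := aux_log_le2 hx0
          simp only [hz₁, hcv]
          have hxc : x * (1 / Real.sqrt x) = Real.sqrt x := by
            field_simp
            exact hsq.symm
          have hxc2 : x * (1 / Real.sqrt x) ^ 2 = 1 := by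
            field_simp
            exact hsq.symm
          -- need log x + 1/√x ≤ √x + 1/2
          have h5 : (1 : ℝ) / Real.sqrt x ≤ 1 / 2 := by
            rw [div_le_div_iff₀ hs (by norm_num)]; linarith
          nlinarith
      linarith
    -- from z₁ ≤ x e^c deduce log z₁ ≤ log x + c
    have hlz : Real.log z₁ ≤ Real.log x + c := by
      have := Real.log_le_log (by linarith) hmain
      rwa [Real.log_mul hx0.ne' (Real.exp_pos c).ne', Real.log_exp] at this
    simp only [hz₁]
    linarith
  -- conclude by monotonicity
  by_contra h
  push_neg at h
  have := aux_mono hz₁1 h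
  rw [hWeq] at this
  linarith
end

section
/- The function W̄₋₁ is increasing and strictly concave on (1, ∞), and its derivative satisfies W̄₋₁'(x) = (1 - 1/W̄₋₁(x))^{-1} for all x > 1. -/
/-- `W̄₋₁` is increasing and strictly concave on `(1, ∞)`, with derivative
`W̄₋₁'(x) = (1 - 1/W̄₋₁(x))⁻¹` for all `x > 1`. -/
theorem stmt_2 (W : ℝ → ℝ)
    (hW : ∀ x : ℝ, 1 ≤ x →
      1 ≤ W x ∧ W x - Real.log (W x) = x ∧ ∀ z : ℝ, 1 ≤ z → z - Real.log z = x → z ≤ W x) :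
    StrictMonoOn W (Set.Ioi (1 : ℝ)) ∧
    StrictConcaveOn ℝ (Set.Ioi (1 : ℝ)) W ∧
    ∀ x : ℝ, 1 < x → HasDerivAt W (1 - 1 / W x)⁻¹ x := by
  set f : ℝ → ℝ := fun z => z - Real.log z with hf
  -- f is strictly monotone on [1, ∞)
  have hfd : ∀ z : ℝ, 0 < z → HasDerivAt f (1 - z⁻¹) z := fun z hz =>
    (hasDerivAt_id z).sub (Real.hasDerivAt_log hz.ne')
  have hfc : ContinuousOn f (Set.Ici 1) := fun z hz =>
    ((hfd z (lt_of_lt_of_le one_pos hz)).continuousAt).continuousWithinAt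
  have hderiv : ∀ z ∈ Set.Ioi (1:ℝ), 0 < deriv f z := by
    intro z hz
    rw [(hfd z (lt_trans one_pos hz)).deriv]
    have : z⁻¹ < 1 := inv_lt_one_of_one_lt₀ hz
    linarith
  have hfmono : StrictMonoOn f (Set.Ici 1) := by
    apply strictMonoOn_of_deriv_pos (convex_Ici 1) hfc
    rwa [interior_Ici]
  -- W x > 1 for x > 1
  have hWgt : ∀ x : ℝ, 1 < x → 1 < W x := by
    intro x hx
    obtain ⟨h1, h2, _⟩ := hW x hx.le
    rcases eq_or_lt_of_le h1 with h | h
    · exfalso; rw [← h] at h2; simp at h2; linarith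
    · exact h
  -- W is strictly monotone on (1, ∞)
  have hmono : StrictMonoOn W (Set.Ioi (1:ℝ)) := by
    intro x hx y hy hxy
    obtain ⟨hx1, hx2, _⟩ := hW x (le_of_lt hx)
    obtain ⟨hy1, hy2, _⟩ := hW y (le_of_lt hy)
    have : f (W x) < f (W y) := by simp only [hf]; rw [hx2, hy2]; exact hxy
    exact (hfmono.lt_iff_lt hx1 hy1).mp this
  -- W (f z) = z for z ≥ 1
  have hleft : ∀ z : ℝ, 1 ≤ z → W (f z) = z := by
    intro z hz
    have hfz1 : 1 ≤ f z := by
      have := Real.log_le_sub_one_of_pos (lt_of_lt_of_le one_pos hz)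
      simp only [hf]; linarith
    obtain ⟨h1, h2, h3⟩ := hW (f z) hfz1
    have hle : z ≤ W (f z) := h3 z hz rfl
    have : f (W (f z)) = f z := h2
    exact hfmono.injOn h1 hz this
  -- continuity of W at points of (1, ∞)
  have hcont : ∀ x : ℝ, 1 < x → ContinuousAt W x := by
    intro x hx
    apply hmono.continuousAt_of_image_mem_nhds (Ioi_mem_nhds hx)
    have hsub : Set.Ioi (1:ℝ) ⊆ W '' Set.Ioi 1 := by
      intro z hz
      have hfz : 1 < f z := by
        have := hfmono (Set.self_mem_Ici) (Set.mem_Ici.mpr (le_of_lt hz)) hz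
        simpa [hf] using this
      exact ⟨f z, hfz, hleft z (le_of_lt hz)⟩
    exact Filter.mem_of_superset (Ioi_mem_nhds (hWgt x hx)) hsub
  -- derivative
  have hd : ∀ x : ℝ, 1 < x → HasDerivAt W (1 - 1 / W x)⁻¹ x := by
    intro x hx
    have hWx := hWgt x hx
    have hfd' : HasDerivAt f (1 - 1 / W x) (W x) := by
      rw [one_div]; exact hfd (W x) (lt_trans one_pos hWx)
    have hne : (1 - 1 / W x) ≠ 0 := by
      have : 1 / W x < 1 := by
        rw [one_div]; exact inv_lt_one_of_one_lt₀ hWx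
      linarith
    apply HasDerivAt.of_local_left_inverse (hcont x hx) hfd' hne
    filter_upwards [Ioi_mem_nhds hx] with y hy
    exact (hW y (le_of_lt hy)).2.1
  refine ⟨hmono, ?_, hd⟩
  -- strict concavity
  have hWcont : ContinuousOn W (Set.Ioi 1) := fun x hx => (hcont x hx).continuousWithinAt
  apply StrictAntiOn.strictConcaveOn_of_deriv (convex_Ioi 1) hWcont
  rw [interior_Ioi]
  intro x hx y hy hxy
  rw [(hd x hx).deriv, (hd y hy).deriv]
  have hWx := hWgt x hx
  have hWy := hWgt y hy
  have hWlt : W x < W y := hmono hx hy hxy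
  have h1x : 0 < 1 - 1 / W x := by
    have : 1 / W x < 1 := by rw [one_div]; exact inv_lt_one_of_one_lt₀ hWx
    linarith
  have hlt : 1 - 1 / W x < 1 - 1 / W y := by
    have : 1 / W y < 1 / W x :=
      one_div_lt_one_div_of_lt (lt_trans one_pos hWx) hWlt
    linarith
  exact inv_strictAnti₀ h1x hlt
end

section
/- For a, b ≥ 1, the minimal value over η > 0 of f(η) = (1+η)(a + ln(b + 1/η)) is at most 1 - b + W̄₋₁(a + b), with equality when b = 1. -/
/-- Pointwise lower bound in the case `b = 1`. -/
lemma aux_lower (a w η : ℝ) (hw : 0 < w) (hlogw : Real.log w = w - a - 1)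
    (hη : 0 < η) : w ≤ (1 + η) * (a + Real.log (1 + 1/η)) := by
  have hu : (0:ℝ) < 1 + 1/η := by positivity
  have h1 : Real.log (w / (1 + 1/η)) ≤ w / (1 + 1/η) - 1 :=
    Real.log_le_sub_one_of_pos (by positivity)
  have h2 : Real.log (w / (1 + 1/η)) = Real.log w - Real.log (1 + 1/η) :=
    Real.log_div hw.ne' hu.ne'
  have key : w - w / (1 + 1/η) ≤ a + Real.log (1 + 1/η) := by
    rw [hlogw] at h2; linarith
  have heq : (1 + η) * (w - w / (1 + 1/η)) = w := by
    field_simp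
    ring
  calc w = (1 + η) * (w - w / (1 + 1/η)) := heq.symm
    _ ≤ (1 + η) * (a + Real.log (1 + 1/η)) :=
        mul_le_mul_of_nonneg_left key (by positivity)

lemma aux_cont (a b ε M : ℝ) (hε : 0 < ε) (hb : 0 < b) :
    ContinuousOn (fun η : ℝ => (1 + η) * (a + Real.log (b + 1/η))) (Set.Icc ε M) := by
  apply ContinuousOn.mul
  · exact (continuous_const.add continuous_id).continuousOn
  · apply ContinuousOn.add continuousOn_const
    apply ContinuousOn.log
    · exact ContinuousOn.add continuousOn_const
        (continuousOn_const.div continuousOn_id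
          (fun x hx => ne_of_gt (lt_of_lt_of_le hε hx.1)))
    · intro x hx
      have hx0 : 0 < x := lt_of_lt_of_le hε hx.1
      have : 0 < b + 1/x := by positivity
      exact this.ne'

/-- For `a, b ≥ 1`, the minimal value over `η > 0` of
`f η = (1+η)(a + log (b + 1/η))` is attained at some `η⋆` and is at most
`1 - b + W̄₋₁ (a + b)`, with equality when `b = 1`. -/
theorem stmt_4 (W : ℝ → ℝ)
    (hW : ∀ x : ℝ, 1 ≤ x →
      1 ≤ W x ∧ W x - Real.log (W x) = x ∧ ∀ z : ℝ, 1 ≤ z → z - Real.log z = x → z ≤ W x)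
    (a b : ℝ) (ha : 1 ≤ a) (hb : 1 ≤ b) :
    ∃ η : ℝ, 0 < η ∧
      (∀ η' : ℝ, 0 < η' →
        (1 + η) * (a + Real.log (b + 1/η)) ≤ (1 + η') * (a + Real.log (b + 1/η'))) ∧
      (1 + η) * (a + Real.log (b + 1/η)) ≤ 1 - b + W (a + b) ∧
      (b = 1 → (1 + η) * (a + Real.log (b + 1/η)) = 1 - b + W (a + b)) := by
  obtain ⟨hw1, hw2, -⟩ := hW (a + b) (by linarith)
  set w := W (a + b) with hwdef
  set f : ℝ → ℝ := fun η => (1 + η) * (a + Real.log (b + 1/η)) with hfdef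
  have hlw : 0 ≤ Real.log w := Real.log_nonneg hw1
  have hw2' : 2 ≤ w := by linarith
  have hwpos : (0:ℝ) < w := by linarith
  have hwm1 : (0:ℝ) < w - 1 := by linarith
  set η₀ : ℝ := 1 / (w - 1) with hη₀
  have hη₀pos : 0 < η₀ := by positivity
  have hinv : 1 / η₀ = w - 1 := by rw [hη₀, one_div_one_div]
  set C : ℝ := f η₀ with hC
  have hCb : C ≤ 1 - b + w := by
    have hbw : (0:ℝ) < b + (w - 1) := by linarith
    have h1 : Real.log ((b + (w - 1)) / w) ≤ (b + (w - 1)) / w - 1 :=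
      Real.log_le_sub_one_of_pos (by positivity)
    have h2 : Real.log ((b + (w - 1)) / w) = Real.log (b + (w - 1)) - Real.log w :=
      Real.log_div hbw.ne' hwpos.ne'
    have h2' : (b + (w - 1)) / w - 1 = (b - 1) / w := by field_simp; ring
    have h3 : a + Real.log (b + (w - 1)) ≤ (w - b) + (b - 1) / w := by
      have hlogw : Real.log w = w - (a + b) := by linarith
      linarith [h1, h2, h2', hlogw]
    have h4 : (1 + η₀) * (a + Real.log (b + (w - 1))) ≤ (1 + η₀) * ((w - b) + (b - 1) / w) :=
      mul_le_mul_of_nonneg_left h3 (by positivity)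
    have h5 : (1 + η₀) * ((w - b) + (b - 1) / w) = 1 - b + w := by
      rw [hη₀]; field_simp; ring
    have hCeq : C = (1 + η₀) * (a + Real.log (b + (w - 1))) := by
      rw [hC, hfdef]; simp only []; rw [hinv]
    linarith [h4, h5, hCeq.le, hCeq.ge]
  set M : ℝ := max η₀ C with hM
  set ε : ℝ := min η₀ (Real.exp (a - C)) with hε
  have hεpos : 0 < ε := lt_min hη₀pos (Real.exp_pos _)
  have hη₀K : η₀ ∈ Set.Icc ε M := ⟨min_le_left _ _, le_max_left _ _⟩
  obtain ⟨η, hηK, hmin⟩ := isCompact_Icc.exists_isMinOn ⟨η₀, hη₀K⟩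
    (aux_cont a b ε M hεpos (by linarith))
  have hηpos : 0 < η := lt_of_lt_of_le hεpos hηK.1
  have hηC : f η ≤ C := hmin hη₀K
  have hglobal : ∀ η' : ℝ, 0 < η' → f η ≤ f η' := by
    intro η' hη'
    by_cases hK : η' ∈ Set.Icc ε M
    · exact hmin hK
    · simp only [Set.mem_Icc, not_and_or, not_le] at hK
      have hfac : 0 ≤ a + Real.log (b + 1/η') := by
        have : (0:ℝ) ≤ Real.log (b + 1/η') := Real.log_nonneg (by
          have : (0:ℝ) < 1/η' := by positivity
          linarith)
        linarith
      rcases hK with hK | hK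
      · -- η' < ε : small case
        have hle : η' ≤ Real.exp (a - C) := le_trans hK.le (min_le_right _ _)
        have hlogη' : Real.log η' ≤ a - C := by
          calc Real.log η' ≤ Real.log (Real.exp (a - C)) :=
                Real.log_le_log hη' hle
            _ = a - C := Real.log_exp _
        have hmono : Real.log (1/η') ≤ Real.log (b + 1/η') :=
          Real.log_le_log (by positivity) (by linarith)
        have hloginv : Real.log (1/η') = -Real.log η' := by
          rw [one_div, Real.log_inv]
        have h6 : C ≤ a + Real.log (b + 1/η') := by linarith
        have h7 : a + Real.log (b + 1/η') ≤ f η' := by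
          rw [hfdef]
          nlinarith [mul_nonneg hη'.le hfac]
        linarith
      · -- M < η' : large case
        have hMC : C ≤ M := le_max_right _ _
        have h7 : 1 + η' ≤ f η' := by
          rw [hfdef]
          nlinarith [mul_nonneg (by positivity : (0:ℝ) ≤ 1 + η')
            (by linarith [Real.log_nonneg (show (1:ℝ) ≤ b + 1/η' by
              have : (0:ℝ) < 1/η' := by positivity
              linarith)] : (0:ℝ) ≤ a - 1 + Real.log (b + 1/η'))]
        linarith
  refine ⟨η, hηpos, hglobal, ?_, ?_⟩
  · exact le_trans (hglobal η₀ hη₀pos) hCb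
  · intro hb1
    have hlogw : Real.log w = w - a - 1 := by rw [hb1] at hw2; linarith
    have hlow := aux_lower a w η hwpos hlogw hηpos
    have hup : f η ≤ 1 - b + w := le_trans (hglobal η₀ hη₀pos) hCb
    have hfη : f η = (1 + η) * (a + Real.log (b + 1/η)) := rfl
    rw [hb1] at hup hfη ⊢
    linarith
end

section
/- Consider a sequence of Bernoulli-like tracking decisions: at each step n, given a count c_n and a target β ∈ (0,1), set x_{n+1} = x_n + 1 if x_n ≤ β(c_n + 1) and x_{n+1} = x_n otherwise, where c_{n+1} = c_n + 1 at each step and x_0 = c_0 = 0. Then for all n, -1/2 ≤ x_n - β c_n ≤ 1. -/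
/-- Two-point C-tracking guarantee: with `x 0 = 0` and
`x (n+1) = x n + 1` if `x n ≤ β (n+1)`, else `x (n+1) = x n`, one has
`-1/2 ≤ x n - β n ≤ 1` for all `n`. -/
theorem stmt_6 (β : ℝ) (hβ : β ∈ Set.Ioo (0 : ℝ) 1) (x : ℕ → ℝ)
    (hx0 : x 0 = 0)
    (hstep : ∀ n : ℕ, x (n + 1) = if x n ≤ β * ((n : ℝ) + 1) then x n + 1 else x n) :
    ∀ n : ℕ, -1/2 ≤ x n - β * n ∧ x n - β * n ≤ 1 := by
  obtain ⟨hβ0, hβ1⟩ := hβ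
  intro n
  induction n with
  | zero => simp [hx0]; norm_num
  | succ n ih =>
    obtain ⟨ih1, ih2⟩ := ih
    have h := hstep n
    push_cast [Nat.cast_succ]
    by_cases hc : x n ≤ β * ((n : ℝ) + 1)
    · rw [if_pos hc] at h
      constructor <;> nlinarith
    · rw [if_neg hc] at h
      push_neg at hc
      constructor <;> nlinarith
end

section
/- For β ∈ (0,1) and a K-armed Gaussian bandit μ with unique best arm i*, the β-characteristic time satisfies T*_β(μ) = 2 r_β(μ)/β, where r_β(μ) is the unique solution r in (1/min_{i≠i*}(μ_{i*}-μ_i)², ∞) of Σ_{i≠i*} 1/(r(μ_{i*}-μ_i)² - 1) = (1-β)/β, and the function r ↦ Σ_{i≠i*} 1/(r(μ_{i*}-μ_i)² - 1) - (1-β)/β is convex and decreasing on that interval. -/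
private lemma aux_denom_pos {m d r : ℝ} (hm0 : 0 < m) (hmd : m ≤ d) (hr : 1/m < r) :
    0 < r * d - 1 := by
  have h1 : 1 < r * m := (div_lt_iff₀ hm0).mp hr
  have hr0 : 0 < r := lt_trans (by positivity) hr
  nlinarith

private lemma aux_convexOn_sum {ι : Type*} (t : Finset ι) (s : Set ℝ) (hs : Convex ℝ s)
    (f : ι → ℝ → ℝ) (h : ∀ i ∈ t, ConvexOn ℝ s (f i)) :
    ConvexOn ℝ s (fun x => ∑ i ∈ t, f i x) := by
  classical
  induction t using Finset.induction with
  | empty => simpa using convexOn_const (0 : ℝ) hs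
  | insert a t hnot ih =>
    simp only [Finset.sum_insert hnot]
    exact (h a (Finset.mem_insert_self a t)).add
      (ih fun i hi => h i (Finset.mem_insert_of_mem hi))

private lemma aux_convexOn_term {m d : ℝ} (hm0 : 0 < m) (hmd : m ≤ d) :
    ConvexOn ℝ (Set.Ioi (1/m)) (fun r : ℝ => 1 / (r * d - 1)) := by
  have hA : ConvexOn ℝ ((AffineMap.lineMap (-1 : ℝ) (d - 1) : ℝ →ᵃ[ℝ] ℝ) ⁻¹' Set.Ioi (0:ℝ))
      ((fun x : ℝ => x ^ (-1 : ℤ)) ∘ (AffineMap.lineMap (-1 : ℝ) (d - 1) : ℝ →ᵃ[ℝ] ℝ)) :=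
    (convexOn_zpow (-1)).comp_affineMap _
  have hsub : Set.Ioi (1/m) ⊆
      (AffineMap.lineMap (-1 : ℝ) (d - 1) : ℝ →ᵃ[ℝ] ℝ) ⁻¹' Set.Ioi (0:ℝ) := by
    intro r hr
    have := aux_denom_pos hm0 hmd hr
    simp only [Set.mem_preimage, AffineMap.lineMap_apply, vsub_eq_sub, vadd_eq_add,
      smul_eq_mul, Set.mem_Ioi]
    linarith
  have := (hA.subset hsub (convex_Ioi _))
  convert this using 1
  funext r
  simp [AffineMap.lineMap_apply, smul_eq_mul, one_div, zpow_neg]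
  ring_nf

set_option maxHeartbeats 2000000 in
/-- For `β ∈ (0,1)` and a `K`-armed unit-variance Gaussian bandit with unique
best arm `i⋆`, the function `φ(r) = Σ_{i≠i⋆} 1/(r(μ_{i⋆}-μ_i)² - 1) - (1-β)/β` is convex
and (strictly) decreasing on `(1/min_{i≠i⋆}(μ_{i⋆}-μ_i)², ∞)`, it has a unique root `r_β`
there, and the β-characteristic time satisfies `T*_β(μ) = 2 r_β/β`, i.e. the maximal value
of `min_{i≠i⋆} (μ_{i⋆}-μ_i)²/(2(1/β+1/w_i))` over `w` in the simplex with `w_{i⋆} = β`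
equals `β/(2 r_β)`. -/
theorem stmt_9 (K : ℕ) (hK : 2 ≤ K) (μ : Fin K → ℝ) (istar : Fin K)
    (hbest : ∀ i, i ≠ istar → μ i < μ istar)
    (β : ℝ) (hβ : β ∈ Set.Ioo (0 : ℝ) 1)
    (m : ℝ) (hm : IsLeast {d : ℝ | ∃ i, i ≠ istar ∧ d = (μ istar - μ i)^2} m) :
    ConvexOn ℝ (Set.Ioi (1/m))
      (fun r => (∑ i ∈ Finset.univ.erase istar, 1 / (r * (μ istar - μ i)^2 - 1)) - (1-β)/β) ∧
    StrictAntiOn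
      (fun r => (∑ i ∈ Finset.univ.erase istar, 1 / (r * (μ istar - μ i)^2 - 1)) - (1-β)/β)
      (Set.Ioi (1/m)) ∧
    ∃ r ∈ Set.Ioi (1/m),
      (∑ i ∈ Finset.univ.erase istar, 1 / (r * (μ istar - μ i)^2 - 1)) - (1-β)/β = 0 ∧
      (∀ r' ∈ Set.Ioi (1/m),
        (∑ i ∈ Finset.univ.erase istar, 1 / (r' * (μ istar - μ i)^2 - 1)) - (1-β)/β = 0 →
        r' = r) ∧
      IsGreatest {y : ℝ | ∃ w : Fin K → ℝ, (∀ i, 0 < w i) ∧ (∑ i, w i) = 1 ∧ w istar = β ∧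
          (∀ i, i ≠ istar → y ≤ (μ istar - μ i)^2 / (2 * (1/β + 1/(w i)))) ∧
          (∃ i, i ≠ istar ∧ y = (μ istar - μ i)^2 / (2 * (1/β + 1/(w i))))}
        (β / (2 * r)) := by
  classical
  obtain ⟨hβ0, hβ1⟩ := hβ
  set D : Fin K → ℝ := fun i => (μ istar - μ i)^2 with hD
  obtain ⟨⟨i₀, hi₀, hmi₀⟩, hmlb⟩ := hm
  have hmD : ∀ i, i ≠ istar → m ≤ D i := fun i hi => hmlb ⟨i, hi, rfl⟩
  have hm0 : 0 < m := by
    rw [hmi₀]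
    exact pow_pos (sub_pos.mpr (hbest i₀ hi₀)) 2
  have hD0 : ∀ i, i ≠ istar → 0 < D i := fun i hi => lt_of_lt_of_le hm0 (hmD i hi)
  have hdenom : ∀ i, i ≠ istar → ∀ r ∈ Set.Ioi (1/m), 0 < r * D i - 1 :=
    fun i hi r hr => aux_denom_pos hm0 (hmD i hi) hr
  have hi₀mem : i₀ ∈ Finset.univ.erase istar := Finset.mem_erase.mpr ⟨hi₀, Finset.mem_univ _⟩
  have hne : (Finset.univ.erase istar).Nonempty := ⟨i₀, hi₀mem⟩
  -- convexity
  have hconv : ConvexOn ℝ (Set.Ioi (1/m))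
      (fun r => (∑ i ∈ Finset.univ.erase istar, 1 / (r * D i - 1)) - (1-β)/β) := by
    have hsum : ConvexOn ℝ (Set.Ioi (1/m))
        (fun r => ∑ i ∈ Finset.univ.erase istar, 1 / (r * D i - 1)) :=
      aux_convexOn_sum _ _ (convex_Ioi _) _
        (fun i hi => aux_convexOn_term hm0 (hmD i (Finset.mem_erase.mp hi).1))
    have := hsum.add (convexOn_const (-((1-β)/β)) (convex_Ioi (1/m)))
    exact ConvexOn.sub hsum (concaveOn_const ((1-β)/β) (convex_Ioi (1/m)))
  -- strict antitonicity
  have hanti : StrictAntiOn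
      (fun r => (∑ i ∈ Finset.univ.erase istar, 1 / (r * D i - 1)) - (1-β)/β)
      (Set.Ioi (1/m)) := by
    intro a ha b hb hab
    simp only
    have : ∀ i ∈ Finset.univ.erase istar, 1 / (b * D i - 1) < 1 / (a * D i - 1) := by
      intro i hi
      have hi' := (Finset.mem_erase.mp hi).1
      have hda := hdenom i hi' a ha
      have hdb := hdenom i hi' b hb
      apply one_div_lt_one_div_of_lt hda
      nlinarith [hD0 i hi']
    have := Finset.sum_lt_sum_of_nonempty hne this
    linarith
  refine ⟨hconv, hanti, ?_⟩
  -- points for IVT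
  set a : ℝ := (1 + β/(2*(1-β)))/m with ha_def
  set b : ℝ := (1 + (K*β)/(1-β))/m with hb_def
  have h1β : 0 < 1 - β := by linarith
  have ham : a * m - 1 = β/(2*(1-β)) := by rw [ha_def]; field_simp; ring
  have hbm : b * m - 1 = (K*β)/(1-β) := by rw [hb_def]; field_simp; ring
  have hKpos : (0:ℝ) < K := by positivity
  have hx1 : 0 < β/(2*(1-β)) := by positivity
  have hx2 : 0 < (K*β)/(1-β) := by positivity
  have h2K : (2:ℝ) ≤ K := by exact_mod_cast hK
  have haI : a ∈ Set.Ioi (1/m) := by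
    rw [Set.mem_Ioi, ha_def, div_lt_div_iff₀ hm0 hm0]
    nlinarith
  have hbI : b ∈ Set.Ioi (1/m) := by
    rw [Set.mem_Ioi, hb_def, div_lt_div_iff₀ hm0 hm0]
    nlinarith
  have hab : a < b := by
    rw [ha_def, hb_def, div_lt_div_iff₀ hm0 hm0]
    have hx3 : β/(2*(1-β)) < (K*β)/(1-β) := by
      rw [div_lt_div_iff₀ (by positivity) h1β]
      nlinarith [mul_pos hβ0 h1β]
    nlinarith
  have haIle : ∀ r ∈ Set.Icc a b, r ∈ Set.Ioi (1/m) := fun r hr =>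
    lt_of_lt_of_le haI hr.1
  -- φ a > 0
  have hsum_ge : ∀ r ∈ Set.Ioi (1/m),
      1 / (r * m - 1) ≤ ∑ i ∈ Finset.univ.erase istar, 1 / (r * D i - 1) := by
    intro r hr
    have hmDi : m = D i₀ := hmi₀
    have : 1 / (r * D i₀ - 1) ≤ ∑ i ∈ Finset.univ.erase istar, 1 / (r * D i - 1) :=
      Finset.single_le_sum (f := fun i => 1 / (r * D i - 1)) (fun i hi =>
        le_of_lt (one_div_pos.mpr (hdenom i (Finset.mem_erase.mp hi).1 r hr))) hi₀mem
    rwa [hmDi]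
  have hφa : 0 < (∑ i ∈ Finset.univ.erase istar, 1 / (a * D i - 1)) - (1-β)/β := by
    have h1 := hsum_ge a haI
    rw [ham] at h1
    have : (1-β)/β < 1 / (β/(2*(1-β))) := by
      rw [one_div_div, div_lt_div_iff₀ hβ0 hβ0]
      nlinarith
    linarith
  -- φ b < 0
  have hφb : (∑ i ∈ Finset.univ.erase istar, 1 / (b * D i - 1)) - (1-β)/β < 0 := by
    have hbm1 : 0 < b * m - 1 := aux_denom_pos hm0 le_rfl hbI
    have hle : ∑ i ∈ Finset.univ.erase istar, 1 / (b * D i - 1)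
        ≤ ∑ _i ∈ Finset.univ.erase istar, 1 / (b * m - 1) := by
      apply Finset.sum_le_sum
      intro i hi
      have hi' := (Finset.mem_erase.mp hi).1
      apply one_div_le_one_div_of_le hbm1
      nlinarith [hmD i hi', hbI, (Set.mem_Ioi.mp hbI), hm0]
    have hcard : (Finset.univ.erase istar).card = K - 1 := by
      rw [Finset.card_erase_of_mem (Finset.mem_univ _), Finset.card_univ, Fintype.card_fin]
    rw [Finset.sum_const, hcard, nsmul_eq_mul] at hle
    have hKK : ((K - 1 : ℕ) : ℝ) = (K:ℝ) - 1 := by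
      have : 1 ≤ K := le_trans (by norm_num) hK
      push_cast [this]
      ring
    rw [hKK, hbm] at hle
    have hfinal : ((K:ℝ) - 1) * (1 / ((K*β)/(1-β))) < (1-β)/β := by
      rw [one_div_div, ← mul_div_assoc]
      rw [div_lt_div_iff₀ (by positivity) hβ0]
      nlinarith [mul_pos h1β hβ0]
    linarith
  -- IVT
  have hcont : ContinuousOn
      (fun r => (∑ i ∈ Finset.univ.erase istar, 1 / (r * D i - 1)) - (1-β)/β)
      (Set.Icc a b) := by
    apply ContinuousOn.sub _ continuousOn_const
    apply continuousOn_finset_sum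
    intro i hi
    have hi' := (Finset.mem_erase.mp hi).1
    apply ContinuousOn.div continuousOn_const
    · exact ((continuousOn_id.mul continuousOn_const).sub continuousOn_const)
    · intro r hr
      exact ne_of_gt (hdenom i hi' r (haIle r hr))
  have h0mem : (0:ℝ) ∈ Set.Icc
      ((fun r => (∑ i ∈ Finset.univ.erase istar, 1 / (r * D i - 1)) - (1-β)/β) b)
      ((fun r => (∑ i ∈ Finset.univ.erase istar, 1 / (r * D i - 1)) - (1-β)/β) a) :=
    ⟨le_of_lt hφb, le_of_lt hφa⟩
  obtain ⟨r, hrIcc, hr0⟩ := intermediate_value_Icc' (le_of_lt hab) hcont h0mem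
  have hrI : r ∈ Set.Ioi (1/m) := haIle r hrIcc
  have hr0' : (∑ i ∈ Finset.univ.erase istar, 1 / (r * D i - 1)) - (1-β)/β = 0 := hr0
  refine ⟨r, hrI, hr0', ?_, ?_⟩
  · -- uniqueness
    intro r' hr'I hr'0
    exact hanti.injOn hr'I hrI (hr'0.trans hr0'.symm)
  · -- IsGreatest
    have hr0'' : ∑ i ∈ Finset.univ.erase istar, 1 / (r * D i - 1) = (1-β)/β :=
      sub_eq_zero.mp hr0'
    have hrpos : 0 < r := lt_trans (by positivity) hrI
    have hrd : ∀ i, i ≠ istar → 0 < r * D i - 1 := fun i hi => hdenom i hi r hrI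
    constructor
    · -- membership: the optimal w
      have hwpos : ∀ i : Fin K, 0 < (if i = istar then β else β / (r * D i - 1)) := by
        intro i
        by_cases h : i = istar
        · rw [if_pos h]; exact hβ0
        · rw [if_neg h]; exact div_pos hβ0 (hrd i h)
      have hwsum : ∑ i : Fin K, (if i = istar then β else β / (r * D i - 1)) = 1 := by
        rw [← Finset.add_sum_erase _ _ (Finset.mem_univ istar), if_pos rfl]
        have h2 : ∀ i ∈ Finset.univ.erase istar,
            (if i = istar then β else β / (r * D i - 1)) = β * (1 / (r * D i - 1)) := by
          intro i hi
          rw [if_neg (Finset.mem_erase.mp hi).1]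
          ring
        rw [Finset.sum_congr rfl h2, ← Finset.mul_sum, hr0'']
        field_simp
        ring
      have hval : ∀ i : Fin K, i ≠ istar →
          D i / (2 * (1/β + 1/(if i = istar then β else β / (r * D i - 1)))) = β / (2 * r) := by
        intro i hi
        have hdi := (hD0 i hi).ne'
        have hrdi := (hrd i hi).ne'
        rw [if_neg hi, one_div_div]
        have hpos : 0 < 2 * (1/β + (r * D i - 1)/β) := by
          have h1 : 0 < (r * D i - 1)/β := div_pos (hrd i hi) hβ0
          have h2 : 0 < 1/β := by positivity
          linarith
        rw [div_eq_div_iff hpos.ne' (by positivity : (0:ℝ) < 2 * r).ne']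
        field_simp
        ring
      refine ⟨fun i => if i = istar then β else β / (r * D i - 1),
        hwpos, hwsum, if_pos rfl, ?_, ⟨i₀, hi₀, (hval i₀ hi₀).symm⟩⟩
      intro i hi
      rw [hval i hi]
    · -- upper bound
      rintro y ⟨w, hwpos, hwsum, hwistar, hwle, -⟩
      by_contra hgt
      push_neg at hgt
      have hkey : ∀ i ∈ Finset.univ.erase istar, β / (r * D i - 1) < w i := by
        intro i hi
        have hi' := (Finset.mem_erase.mp hi).1
        have h1 : β / (2 * r) < D i / (2 * (1/β + 1/(w i))) := lt_of_lt_of_le hgt (hwle i hi')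
        have hwi := hwpos i
        have hpos : 0 < 2 * (1/β + 1/(w i)) := by positivity
        rw [div_lt_div_iff₀ (by positivity) hpos] at h1
        -- β * (2 * (1/β + 1/w i)) < D i * (2 r)
        have h2 : 1 + β / w i < r * D i := by
          have hb' : β * (2 * (1/β + 1/(w i))) = 2 * (1 + β / w i) := by
            field_simp
          nlinarith [h1]
        have h3 : β / w i < r * D i - 1 := by linarith
        rw [div_lt_iff₀ hwi] at h3
        rw [div_lt_iff₀ (hrd i hi')]
        linarith [h3]
      have hsumlt : ∑ i ∈ Finset.univ.erase istar, β / (r * D i - 1)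
          < ∑ i ∈ Finset.univ.erase istar, w i :=
        Finset.sum_lt_sum_of_nonempty hne hkey
      have hL : ∑ i ∈ Finset.univ.erase istar, β / (r * D i - 1) = 1 - β := by
        have : ∀ i ∈ Finset.univ.erase istar, β / (r * D i - 1) = β * (1 / (r * D i - 1)) := by
          intro i _; ring
        rw [Finset.sum_congr rfl this, ← Finset.mul_sum, hr0'']
        field_simp
      have hR : ∑ i ∈ Finset.univ.erase istar, w i = 1 - β := by
        have := hwsum
        rw [← Finset.add_sum_erase _ _ (Finset.mem_univ istar), hwistar] at this
        linarith
      rw [hL, hR] at hsumlt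
      exact lt_irrefl _ hsumlt
end

section
/- For the 'equal means' K-armed Gaussian instance with K ≥ 3, μ_{i*} = 0 and μ_i = -Δ for all i ≠ i* (Δ > 0), one has T*_{1/2}(μ) = 4K/Δ² ; combined with T*(μ) = 2(1+√(K-1))²/Δ², this gives T*_{1/2}(μ)/T*(μ) = 2K/(1+√(K-1))². -/
/-- For the equal-means `K`-armed Gaussian instance (`K ≥ 3`, `μ_{i⋆} = 0`,
`μ_i = -Δ` for `i ≠ i⋆`, `Δ > 0`), one has `T*_{1/2}(μ) = 4K/Δ²`, i.e. the maximal value of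
`min_{i≠i⋆}(μ_{i⋆}-μ_i)²/(2(1/(1/2)+1/w_i))` over simplex vectors with `w_{i⋆} = 1/2` equals
`Δ²/(4K)`; combined with `T*(μ) = 2(1+√(K-1))²/Δ²`, this gives
`T*_{1/2}(μ)/T*(μ) = 2K/(1+√(K-1))²`. -/
theorem stmt_10 (K : ℕ) (hK : 3 ≤ K) (Δ : ℝ) (hΔ : 0 < Δ)
    (μ : Fin K → ℝ) (istar : Fin K)
    (hstar : μ istar = 0) (hother : ∀ i, i ≠ istar → μ i = -Δ) :
    IsGreatest {y : ℝ | ∃ w : Fin K → ℝ, (∀ i, 0 < w i) ∧ (∑ i, w i) = 1 ∧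
        w istar = 1/2 ∧
        (∀ i, i ≠ istar → y ≤ (μ istar - μ i)^2 / (2 * (1/(1/2 : ℝ) + 1/(w i)))) ∧
        (∃ i, i ≠ istar ∧ y = (μ istar - μ i)^2 / (2 * (1/(1/2 : ℝ) + 1/(w i))))}
      (Δ^2 / (4 * K)) ∧
    (4 * (K : ℝ) / Δ^2) / (2 * (1 + Real.sqrt ((K : ℝ) - 1))^2 / Δ^2)
      = 2 * K / (1 + Real.sqrt ((K : ℝ) - 1))^2 := by
  have hK3 : (3:ℝ) ≤ (K:ℝ) := by exact_mod_cast hK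
  have hKm1 : (0:ℝ) < (K:ℝ) - 1 := by linarith
  have hKpos : (0:ℝ) < (K:ℝ) := by linarith
  have hcardR : ((Finset.univ.erase istar).card : ℝ) = (K:ℝ) - 1 := by
    rw [Finset.card_erase_of_mem (Finset.mem_univ istar), Finset.card_univ, Fintype.card_fin]
    have h1 : (1:ℕ) ≤ K := by omega
    push_cast [Nat.cast_sub h1]
    ring
  have hexist : ∃ i : Fin K, i ≠ istar := by
    have : 1 < Fintype.card (Fin K) := by simp; omega
    exact Fintype.exists_ne_of_one_lt_card this istar
  obtain ⟨i0, hi0⟩ := hexist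
  have hval : ∀ i : Fin K, i ≠ istar → (μ istar - μ i)^2 = Δ^2 := by
    intro i hi
    rw [hstar, hother i hi]; ring
  have hden : (2:ℝ) * (1/(1/2) + 1/(1/(2*((K:ℝ)-1)))) = 4 * K := by
    rw [one_div_one_div]; norm_num; ring
  constructor
  · constructor
    · -- membership: uniform weights
      refine ⟨fun i => if i = istar then 1/2 else 1/(2*((K:ℝ)-1)), ?_, ?_, ?_, ?_, ?_⟩
      · intro i
        by_cases h : i = istar
        · simp [h]
        · simp only [if_neg h]; positivity
      · rw [← Finset.sum_erase_add _ _ (Finset.mem_univ istar)]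
        have h1 : ∑ i ∈ Finset.univ.erase istar,
            (if i = istar then (1/2:ℝ) else 1/(2*((K:ℝ)-1)))
            = ∑ _i ∈ Finset.univ.erase istar, (1/(2*((K:ℝ)-1)) : ℝ) :=
          Finset.sum_congr rfl (fun i hi => if_neg (Finset.ne_of_mem_erase hi))
        rw [h1, Finset.sum_const, nsmul_eq_mul, hcardR, if_pos rfl]
        field_simp
        ring
      · simp
      · intro i hi
        rw [hval i hi]
        simp only [if_neg hi]
        rw [hden]
      · refine ⟨i0, hi0, ?_⟩
        rw [hval i0 hi0]
        simp only [if_neg hi0]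
        rw [hden]
    · -- upper bound
      rintro y ⟨w, hwpos, hwsum, hwstar, hle, -⟩
      have hsum' : ∑ i ∈ Finset.univ.erase istar, w i = 1/2 := by
        have h := Finset.sum_erase_add Finset.univ w (Finset.mem_univ istar)
        rw [hwsum, hwstar] at h
        linarith
      have hconst : ∑ _i ∈ Finset.univ.erase istar, (1/(2*((K:ℝ)-1))) = 1/2 := by
        rw [Finset.sum_const, nsmul_eq_mul, hcardR]
        field_simp
      have hne : (Finset.univ.erase istar).Nonempty :=
        ⟨i0, Finset.mem_erase.2 ⟨hi0, Finset.mem_univ i0⟩⟩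
      obtain ⟨i, hi, hwi⟩ := Finset.exists_le_of_sum_le (f := w)
        (g := fun _ => 1/(2*((K:ℝ)-1))) hne (le_of_eq (hsum'.trans hconst.symm))
      have hi' : i ≠ istar := Finset.ne_of_mem_erase hi
      have hwipos := hwpos i
      have h1 : 2*((K:ℝ)-1) ≤ 1 / w i := by
        rw [le_div_iff₀ hwipos]
        calc 2*((K:ℝ)-1) * w i ≤ 2*((K:ℝ)-1) * (1/(2*((K:ℝ)-1))) := by
              apply mul_le_mul_of_nonneg_left hwi; positivity
          _ = 1 := by field_simp
      calc y ≤ (μ istar - μ i)^2 / (2 * (1/(1/2 : ℝ) + 1/(w i))) := hle i hi'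
        _ = Δ^2 / (2 * (1/(1/2 : ℝ) + 1/(w i))) := by rw [hval i hi']
        _ ≤ Δ^2 / (4 * K) := by
            apply div_le_div_of_nonneg_left (by positivity) (by positivity)
            have h2 : (1:ℝ)/(1/2) = 2 := by norm_num
            rw [h2]; nlinarith
  · have hs : (0:ℝ) < 1 + Real.sqrt ((K:ℝ) - 1) := by positivity
    have hΔ2 : Δ^2 ≠ 0 := by positivity
    have hs2 : (1 + Real.sqrt ((K:ℝ) - 1))^2 ≠ 0 := by positivity
    field_simp
    ring
end

section
/- For the equal-means instance (K ≥ 3, μ_{i*} - μ_i = Δ > 0 for all i ≠ i*), the value max_{w ∈ Δ_K} min_{i≠i*} Δ²/(2(1/w_{i*} + 1/w_i)) equals Δ²/(2(1+√(K-1))²), attained at w_{i*} = 1/(1+√(K-1)) and w_i = (1 - w_{i*})/(K-1) for i ≠ i*. -/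
lemma key_ineq (s t : ℝ) (hs : 0 < s) (ht : 0 < t) (ht1 : t < 1) :
    (1 + s)^2 ≤ 1/t + s^2/(1-t) := by
  rw [div_add_div _ _ (ne_of_gt ht) (by linarith), le_div_iff₀ (by nlinarith)]
  nlinarith [sq_nonneg ((1+s)*t - 1)]

lemma denom_eq (K : ℕ) (hK : 3 ≤ K) :
    1 / (1 / (1 + Real.sqrt ((K : ℝ) - 1)))
      + 1 / ((1 - 1 / (1 + Real.sqrt ((K : ℝ) - 1))) / ((K : ℝ) - 1))
      = (1 + Real.sqrt ((K : ℝ) - 1))^2 := by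
  set s := Real.sqrt ((K : ℝ) - 1) with hs
  have hK1 : (0:ℝ) < (K : ℝ) - 1 := by
    have : (3:ℝ) ≤ (K:ℝ) := by exact_mod_cast hK
    linarith
  have hs0 : 0 < s := Real.sqrt_pos.mpr hK1
  have hs2 : s^2 = (K:ℝ) - 1 := Real.sq_sqrt hK1.le
  have h1s : (1:ℝ) + s ≠ 0 := by linarith
  have hnum : 1 - 1 / (1 + s) = s / (1 + s) := by field_simp; ring
  rw [one_div_one_div, hnum]
  rw [div_div, one_div_div]
  rw [← hs2]
  field_simp

/-- For the equal-means instance (`K ≥ 3`, all gaps equal to `Δ > 0`), the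
value `max_{w ∈ Δ_K} min_{i≠i⋆} Δ²/(2(1/w_{i⋆}+1/w_i))` equals `Δ²/(2(1+√(K-1))²)`,
attained at `w_{i⋆} = 1/(1+√(K-1))` and `w_i = (1-w_{i⋆})/(K-1)` for `i ≠ i⋆`. -/
theorem stmt_11 (K : ℕ) (hK : 3 ≤ K) (Δ : ℝ) (hΔ : 0 < Δ) (istar : Fin K) :
    IsGreatest {y : ℝ | ∃ w : Fin K → ℝ, (∀ i, 0 < w i) ∧ (∑ i, w i) = 1 ∧
        (∀ i, i ≠ istar → y ≤ Δ^2 / (2 * (1/(w istar) + 1/(w i)))) ∧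
        (∃ i, i ≠ istar ∧ y = Δ^2 / (2 * (1/(w istar) + 1/(w i))))}
      (Δ^2 / (2 * (1 + Real.sqrt ((K : ℝ) - 1))^2)) ∧
    (∀ i : Fin K, i ≠ istar →
      Δ^2 / (2 * (1 / (1 / (1 + Real.sqrt ((K : ℝ) - 1)))
          + 1 / ((1 - 1 / (1 + Real.sqrt ((K : ℝ) - 1))) / ((K : ℝ) - 1))))
        = Δ^2 / (2 * (1 + Real.sqrt ((K : ℝ) - 1))^2)) := by
  have hK1 : (0:ℝ) < (K : ℝ) - 1 := by
    have : (3:ℝ) ≤ (K:ℝ) := by exact_mod_cast hK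
    linarith
  set s := Real.sqrt ((K : ℝ) - 1) with hsdef
  have hs0 : 0 < s := Real.sqrt_pos.mpr hK1
  have hs2 : s^2 = (K:ℝ) - 1 := Real.sq_sqrt hK1.le
  have h1s : (0:ℝ) < 1 + s := by linarith
  have hdeq := denom_eq K hK
  constructor
  · constructor
    · -- membership
      set a : ℝ := 1 / (1 + s) with ha
      set b : ℝ := (1 - a) / ((K:ℝ) - 1) with hb
      have ha0 : 0 < a := by positivity
      have ha1 : a < 1 := by
        rw [ha, div_lt_one h1s]; linarith
      have hb0 : 0 < b := by
        rw [hb]; exact div_pos (by linarith) hK1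
      refine ⟨fun i => if i = istar then a else b, fun i => ?_, ?_, ?_, ?_⟩
      · dsimp only; split <;> assumption
      · rw [← Finset.add_sum_erase Finset.univ _ (Finset.mem_univ istar)]
        rw [if_pos rfl]
        have : ∑ i ∈ Finset.univ.erase istar, (if i = istar then a else b)
            = ∑ i ∈ Finset.univ.erase istar, b := by
          apply Finset.sum_congr rfl
          intro i hi
          rw [if_neg (Finset.ne_of_mem_erase hi)]
        rw [this, Finset.sum_const, Finset.card_erase_of_mem (Finset.mem_univ istar)]
        simp only [Finset.card_univ, Fintype.card_fin, nsmul_eq_mul]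
        rw [hb]
        have hKcast : ((K - 1 : ℕ) : ℝ) = (K:ℝ) - 1 := by
          have : 1 ≤ K := by omega
          push_cast [this]; ring
        rw [hKcast, mul_div_cancel₀ _ (ne_of_gt hK1)]
        ring
      · intro i hi
        dsimp only
        rw [if_pos rfl, if_neg hi]
        have : 1 / a + 1 / b = (1 + s)^2 := by
          rw [ha, hb] at *
          exact hdeq
        rw [this]
      · have : Nontrivial (Fin K) := Fin.nontrivial_iff_two_le.mpr (by omega)
        obtain ⟨j, hj⟩ := exists_ne istar
        refine ⟨j, hj, ?_⟩
        dsimp only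
        rw [if_pos rfl, if_neg hj]
        have : 1 / a + 1 / b = (1 + s)^2 := hdeq
        rw [this]
    · -- upper bound
      rintro y ⟨w, hw0, hwsum, hle, j0, hj0, hy⟩
      have hcard : (Finset.univ.erase istar).card = K - 1 := by
        rw [Finset.card_erase_of_mem (Finset.mem_univ istar), Finset.card_univ,
          Fintype.card_fin]
      have hKcast : ((K - 1 : ℕ) : ℝ) = (K:ℝ) - 1 := by
        have : 1 ≤ K := by omega
        push_cast [this]; ring
      have hsum' : ∑ i ∈ Finset.univ.erase istar, w i = 1 - w istar := by
        have := Finset.add_sum_erase Finset.univ w (Finset.mem_univ istar)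
        rw [hwsum] at this
        linarith
      have hne : (Finset.univ.erase istar).Nonempty := by
        rw [← Finset.card_pos, hcard]; omega
      have h1w : w istar < 1 := by
        have hpos : 0 < ∑ i ∈ Finset.univ.erase istar, w i :=
          Finset.sum_pos (fun i _ => hw0 i) hne
        linarith [hsum' ▸ hpos]
      obtain ⟨j, hjmem, hjle⟩ :
          ∃ j ∈ Finset.univ.erase istar, w j ≤ (1 - w istar) / ((K:ℝ) - 1) := by
        apply Finset.exists_le_of_sum_le hne
        rw [hsum', Finset.sum_const, hcard, nsmul_eq_mul, hKcast,
          mul_div_cancel₀ _ (ne_of_gt hK1)]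
      have hjne : j ≠ istar := Finset.ne_of_mem_erase hjmem
      have hwj : 0 < w j := hw0 j
      have hwi : 0 < w istar := hw0 istar
      have hstep1 : ((K:ℝ) - 1) / (1 - w istar) ≤ 1 / w j := by
        rw [div_le_div_iff₀ (by linarith) hwj]
        have h0 : 0 < (1 - w istar) / ((K:ℝ) - 1) := div_pos (by linarith) hK1
        calc ((K:ℝ) - 1) * w j ≤ ((K:ℝ) - 1) * ((1 - w istar) / ((K:ℝ) - 1)) := by
              exact mul_le_mul_of_nonneg_left hjle hK1.le
          _ = 1 * (1 - w istar) := by field_simp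
      have hstep2 : (1 + s)^2 ≤ 1 / w istar + 1 / w j := by
        have := key_ineq s (w istar) hs0 hwi h1w
        rw [hs2] at this
        linarith
      have hfin : Δ^2 / (2 * (1 / w istar + 1 / w j)) ≤ Δ^2 / (2 * (1 + s)^2) := by
        apply div_le_div_of_nonneg_left (by positivity) (by positivity)
        linarith
      calc y ≤ Δ^2 / (2 * (1 / w istar + 1 / w j)) := hle j hjne
        _ ≤ Δ^2 / (2 * (1 + s)^2) := hfin
  · intro i hi
    rw [hdeq]
end
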